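/- Let C ⊆ ℝ^q be a closed convex cone with nonempty interior, let ε > 0 and let K ⊆ ℝ^q be a compact set. Then every set T ⊆ ℝ^q such that the sets B_v := ({v} + C) ∩ {y ∈ ℝ^q : ‖y − v‖ ≤ ε/2} (v ∈ T) are pairwise disjoint and all contained in K is finite. In particular, there is no injective sequence (v^k)_{k∈ℕ} in ℝ^q with the sets B_{v^k} pairwise disjoint and contained in K. -/

import Mathlib

open Set Pointwise

noncomputable section

/-- `N` is a norm on `Fin q → ℝ`. -/
def IsNormFn {q : ℕ} (N : (Fin q → ℝ) → ℝ) : Prop :=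
  (∀ z, N z = 0 ↔ z = 0) ∧ (∀ (a : ℝ) (z : Fin q → ℝ), N (a • z) = |a| * N z) ∧
    (∀ z w, N (z + w) ≤ N z + N w)

lemma myNormSumLe {q : ℕ} (N : (Fin q → ℝ) → ℝ)
    (h0 : N 0 = 0) (htri : ∀ z w, N (z + w) ≤ N z + N w)
    (s : Finset (Fin q)) (f : Fin q → (Fin q → ℝ)) :
    N (∑ i ∈ s, f i) ≤ ∑ i ∈ s, N (f i) := by
  classical
  induction s using Finset.induction with
  | empty => simp [h0]
  | insert _ _ hx ih =>
      rename_i a s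
      rw [Finset.sum_insert hx, Finset.sum_insert hx]
      exact le_trans (htri _ _) (by linarith)


lemma myNonneg {q : ℕ} (N : (Fin q → ℝ) → ℝ) (hN : IsNormFn N) : ∀ z, 0 ≤ N z := by
  intro z
  have h0 : N 0 = 0 := (hN.1 0).2 rfl
  have := hN.2.2 z ((-1 : ℝ) • z)
  rw [hN.2.1 (-1) z] at this
  simp at this
  nlinarith [this]

-- openness of sublevel set
lemma mySublevelOpen {q : ℕ} (N : (Fin q → ℝ) → ℝ) (hN : IsNormFn N) (c : ℝ) :
    IsOpen {y : Fin q → ℝ | N y < c} := by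
  classical
  have h0 : N 0 = 0 := (hN.1 0).2 rfl
  set M : ℝ := ∑ i : Fin q, N (fun j => if i = j then 1 else 0) with hM
  have hMnn : 0 ≤ M := Finset.sum_nonneg fun i _ => myNonneg N hN _
  rw [Metric.isOpen_iff]
  intro x hx
  have hcx : 0 < c - N x := by simpa using hx
  refine ⟨(c - N x) / (M + 1), by positivity, ?_⟩
  intro y hy
  have hNd : N (y - x) ≤ (c - N x) / (M + 1) * M := by
    have hrepr : y - x = ∑ i : Fin q, (y - x) i • (fun j => if i = j then (1:ℝ) else 0) :=
      pi_eq_sum_univ (y - x)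
    have key := myNormSumLe N h0 hN.2.2 Finset.univ
      (fun i => (y - x) i • (fun j => if i = j then (1:ℝ) else 0))
    rw [← hrepr] at key
    calc N (y - x) ≤ ∑ i : Fin q, N ((y - x) i • (fun j => if i = j then (1:ℝ) else 0)) := key
      _ = ∑ i : Fin q, |(y - x) i| * N (fun j => if i = j then (1:ℝ) else 0) := by
          simp [hN.2.1]
      _ ≤ ∑ i : Fin q, (c - N x) / (M + 1) * N (fun j => if i = j then (1:ℝ) else 0) := by
          apply Finset.sum_le_sum
          intro i _
          have : |(y - x) i| ≤ dist y x := by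
            have hd := dist_le_pi_dist y x i
            rw [Real.dist_eq] at hd
            simpa [Pi.sub_apply] using hd
          have h2 := le_of_lt (lt_of_le_of_lt this hy)
          exact mul_le_mul_of_nonneg_right h2 (myNonneg N hN _)
      _ = (c - N x) / (M + 1) * M := by rw [← Finset.mul_sum]
  have : N y ≤ N x + N (y - x) := by
    have := hN.2.2 x (y - x); simpa using this
  have hlt : (c - N x) / (M + 1) * M < c - N x := by
    rw [div_mul_eq_mul_div, div_lt_iff₀ (by linarith)]
    nlinarith
  simp only [mem_setOf_eq]
  linarith

/-- packing argument — any family of pairwise disjoint translated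
"cone caps" `B_v = ({v} + C) ∩ {y : ‖y − v‖ ≤ ε/2}` contained in a compact set is
finite; in particular no injective sequence of such pairwise disjoint caps exists. -/
theorem stmt18 {q : ℕ}
    (N : (Fin q → ℝ) → ℝ) (hN : IsNormFn N)
    (C : Set (Fin q → ℝ))
    (hCclosed : IsClosed C) (hCconv : Convex ℝ C)
    (hCcone : ∀ t : ℝ, 0 ≤ t → ∀ y ∈ C, t • y ∈ C)
    (hC0 : (0 : Fin q → ℝ) ∈ C)
    (hCsolid : (interior C).Nonempty)
    (ε : ℝ) (hε : 0 < ε)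
    (K : Set (Fin q → ℝ)) (hK : IsCompact K)
    (B : (Fin q → ℝ) → Set (Fin q → ℝ))
    (hB : ∀ v, B v = ({v} + C) ∩ {y | N (y - v) ≤ ε / 2}) :
    (∀ T : Set (Fin q → ℝ),
        (∀ v ∈ T, ∀ u ∈ T, v ≠ u → Disjoint (B v) (B u)) →
        (∀ v ∈ T, B v ⊆ K) → T.Finite) ∧
    ¬ ∃ vk : ℕ → (Fin q → ℝ), Function.Injective vk ∧
        (∀ i j : ℕ, i ≠ j → Disjoint (B (vk i)) (B (vk j))) ∧
        (∀ k, B (vk k) ⊆ K) := by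
  classical
  obtain ⟨x, hx⟩ := hCsolid
  have hNxnn : 0 ≤ N x := myNonneg N hN x
  set t : ℝ := ε / (4 * (N x + 1)) with ht_def
  have ht : 0 < t := by positivity
  -- t • x ∈ interior C
  have htx_mem : t • x ∈ interior C := by
    have hopen : IsOpen ((fun y : Fin q → ℝ => t⁻¹ • y) ⁻¹' interior C) :=
      isOpen_interior.preimage (continuous_const_smul _)
    have hmem : t • x ∈ (fun y : Fin q → ℝ => t⁻¹ • y) ⁻¹' interior C := by
      simp only [mem_preimage, smul_smul, inv_mul_cancel₀ (ne_of_gt ht), one_smul]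
      exact hx
    have hsub : (fun y : Fin q → ℝ => t⁻¹ • y) ⁻¹' interior C ⊆ C := by
      intro y hy
      have h1 : t⁻¹ • y ∈ C := interior_subset hy
      have := hCcone t (le_of_lt ht) _ h1
      rwa [smul_smul, mul_inv_cancel₀ (ne_of_gt ht), one_smul] at this
    exact interior_maximal hsub hopen hmem
  have hNtx : N (t • x) < ε / 2 := by
    rw [hN.2.1, abs_of_pos ht, ht_def]
    rw [div_mul_eq_mul_div, div_lt_iff₀ (by positivity)]
    nlinarith
  set S : Set (Fin q → ℝ) := interior C ∩ {y | N y < ε / 2} with hS_def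
  have hSopen : IsOpen S := isOpen_interior.inter (mySublevelOpen N hN _)
  have hSne : S.Nonempty := ⟨t • x, htx_mem, hNtx⟩
  have hSpos : 0 < MeasureTheory.volume S := hSopen.measure_pos _ hSne
  have hSB : ∀ v, v +ᵥ S ⊆ B v := by
    intro v y hy
    obtain ⟨s, hs, rfl⟩ := hy
    rw [hB]
    refine ⟨?_, ?_⟩
    · rw [singleton_add]
      exact ⟨s, interior_subset hs.1, rfl⟩
    · simp only [mem_setOf_eq, vadd_eq_add, add_sub_cancel_left]
      exact le_of_lt hs.2
  have main : ∀ T : Set (Fin q → ℝ),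
      (∀ v ∈ T, ∀ u ∈ T, v ≠ u → Disjoint (B v) (B u)) →
      (∀ v ∈ T, B v ⊆ K) → T.Finite := by
    intro T hdisj hsub
    by_contra hinf
    have hinf' : T.Infinite := hinf
    let f := hinf'.natEmbedding
    have hdisjA : Pairwise (Function.onFun Disjoint fun n : ℕ => ((f n : Fin q → ℝ)) +ᵥ S) := by
      intro n m hnm
      have hne : (f n : Fin q → ℝ) ≠ (f m : Fin q → ℝ) := by
        intro h
        exact hnm (f.injective (Subtype.ext h))
      exact (hdisj _ (f n).2 _ (f m).2 hne).mono (hSB _) (hSB _)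
    have hmeas : ∀ n : ℕ, MeasurableSet (((f n : Fin q → ℝ)) +ᵥ S) :=
      fun n => (hSopen.vadd _).measurableSet
    have hsum : MeasureTheory.volume (⋃ n, ((f n : Fin q → ℝ)) +ᵥ S)
        = ∑' n : ℕ, MeasureTheory.volume (((f n : Fin q → ℝ)) +ᵥ S) :=
      MeasureTheory.measure_iUnion hdisjA hmeas
    have hvadd : ∀ n : ℕ, MeasureTheory.volume (((f n : Fin q → ℝ)) +ᵥ S)
        = MeasureTheory.volume S := fun n => MeasureTheory.measure_vadd _ _ _
    have htop : MeasureTheory.volume (⋃ n, ((f n : Fin q → ℝ)) +ᵥ S) = ⊤ := by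
      rw [hsum]
      simp only [hvadd]
      exact ENNReal.tsum_const_eq_top_of_ne_zero (ne_of_gt hSpos)
    have hle : MeasureTheory.volume (⋃ n, ((f n : Fin q → ℝ)) +ᵥ S)
        ≤ MeasureTheory.volume K := by
      apply MeasureTheory.measure_mono
      refine iUnion_subset fun n => ?_
      exact (hSB _).trans (hsub _ (f n).2)
    rw [htop] at hle
    exact (ne_of_lt (hK.measure_lt_top (μ := MeasureTheory.volume))) (le_antisymm le_top hle)
  refine ⟨main, ?_⟩
  rintro ⟨vk, hinj, hdis, hsubK⟩
  have hfin := main (Set.range vk)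
    (by rintro v ⟨i, rfl⟩ u ⟨j, rfl⟩ hne
        exact hdis i j fun h => hne (by rw [h]))
    (by rintro v ⟨i, rfl⟩; exact hsubK i)
  exact Set.infinite_range_of_injective hinj hfin
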